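/- Every edge of a subgraph of the knight's graph can be the primary move of at most 3 rails and can be part of at most 6 rails in total. -/

import Mathlib

def knightsGraph (n : ℕ) : SimpleGraph (Fin n × Fin n) where
  Adj a b := (|((a.1 : ℕ) : ℤ) - ((b.1 : ℕ) : ℤ)| = 1 ∧ |((a.2 : ℕ) : ℤ) - ((b.2 : ℕ) : ℤ)| = 2) ∨
             (|((a.1 : ℕ) : ℤ) - ((b.1 : ℕ) : ℤ)| = 2 ∧ |((a.2 : ℕ) : ℤ) - ((b.2 : ℕ) : ℤ)| = 1)
  symm := by
    constructor
    intro a b h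
    rw [abs_sub_comm (((b.1 : ℕ) : ℤ)), abs_sub_comm (((b.2 : ℕ) : ℤ))]
    exact h
  loopless := by
    constructor
    intro a h
    simp at h

instance knightsGraphDecidable (n : ℕ) : DecidableRel (knightsGraph n).Adj := fun _ _ =>
  inferInstanceAs (Decidable (_ ∨ _))

/-- Displacement vector of a knight's move from `a` to `b`. -/
def vec {n : ℕ} (a b : Fin n × Fin n) : ℤ × ℤ :=
  (((b.1 : ℕ) : ℤ) - ((a.1 : ℕ) : ℤ), ((b.2 : ℕ) : ℤ) - ((a.2 : ℕ) : ℤ))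

/-- A rail in a subgraph `G` of the knight's graph: a pair of parallel edges
`(v₀,v₁)`, `(v₂,v₃)` of `G` whose cross edges `(v₀,v₂)`, `(v₁,v₃)` lie in
the knight's graph but not in `G`. -/
def IsRail {n : ℕ} (G : SimpleGraph (Fin n × Fin n)) (v₀ v₁ v₂ v₃ : Fin n × Fin n) : Prop :=
  G.Adj v₀ v₁ ∧ G.Adj v₂ v₃ ∧ vec v₀ v₁ = vec v₂ v₃ ∧
  (knightsGraph n).Adj v₀ v₂ ∧ ¬ G.Adj v₀ v₂ ∧
  (knightsGraph n).Adj v₁ v₃ ∧ ¬ G.Adj v₁ v₃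

/-- Switching a rail: delete the rail's two edges and add the two cross edges. -/
def switchRail {V : Type*} (G : SimpleGraph V) (v₀ v₁ v₂ v₃ : V) : SimpleGraph V :=
  (G.deleteEdges {s(v₀, v₁), s(v₂, v₃)}) ⊔ SimpleGraph.fromEdgeSet {s(v₀, v₂), s(v₁, v₃)}

/-- The eight knight displacement vectors. -/
def K8 : Finset (ℤ × ℤ) := {(1,2),(1,-2),(-1,2),(-1,-2),(2,1),(2,-1),(-2,1),(-2,-1)}

set_option maxHeartbeats 1000000 in
lemma vec_mem_K8 {n : ℕ} {a b : Fin n × Fin n} (h : (knightsGraph n).Adj a b) :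
    vec a b ∈ K8 := by
  have h' : (|((a.1 : ℕ) : ℤ) - ((b.1 : ℕ) : ℤ)| = 1 ∧ |((a.2 : ℕ) : ℤ) - ((b.2 : ℕ) : ℤ)| = 2) ∨
      (|((a.1 : ℕ) : ℤ) - ((b.1 : ℕ) : ℤ)| = 2 ∧ |((a.2 : ℕ) : ℤ) - ((b.2 : ℕ) : ℤ)| = 1) := h
  rcases h' with ⟨h1, h2⟩ | ⟨h1, h2⟩ <;>
  · rw [abs_eq (by norm_num)] at h1 h2
    simp only [K8, Finset.mem_insert, Finset.mem_singleton, vec, Prod.mk.injEq]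
    omega

lemma eq_of_vec_eq {n : ℕ} {a b c : Fin n × Fin n} (h : vec a b = vec a c) : b = c := by
  simp only [vec, Prod.mk.injEq] at h
  obtain ⟨h1, h2⟩ := h
  have e1 : (b.1 : ℕ) = (c.1 : ℕ) := by omega
  have e2 : (b.2 : ℕ) = (c.2 : ℕ) := by omega
  exact Prod.ext (Fin.ext e1) (Fin.ext e2)

/-- The symmetric key of an edge relative to `v₀`. -/
def railKey {n : ℕ} (v₀ : Fin n × Fin n) : Sym2 (Fin n × Fin n) → ℤ × ℤ :=
  Sym2.lift ⟨fun a b => ((vec v₀ a).1 + (vec v₀ b).1, (vec v₀ a).2 + (vec v₀ b).2),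
    fun a b => by
      dsimp only
      rw [add_comm ((vec v₀ a).1), add_comm ((vec v₀ a).2)]⟩

lemma railKey_mk {n : ℕ} (v₀ a b : Fin n × Fin n) :
    railKey v₀ s(a, b) = ((vec v₀ a).1 + (vec v₀ b).1, (vec v₀ a).2 + (vec v₀ b).2) := rfl

lemma rail_edges_card {n : ℕ} (G : SimpleGraph (Fin n × Fin n))
    (v₀ v₁ : Fin n × Fin n) (h : G.Adj v₀ v₁)
    (P : ℤ × ℤ → Prop) [DecidablePred P] (k : ℕ)
    (hcard : (K8.filter (fun d => P d ∧ d ≠ vec v₀ v₁ ∧ d ≠ -vec v₀ v₁)).card ≤ k) :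
    {e : Sym2 (Fin n × Fin n) |
        ∃ v₂ v₃, IsRail G v₀ v₁ v₂ v₃ ∧ P (vec v₀ v₂) ∧ e = s(v₂, v₃)}.ncard ≤ k := by
  classical
  set S := {e : Sym2 (Fin n × Fin n) |
      ∃ v₂ v₃, IsRail G v₀ v₁ v₂ v₃ ∧ P (vec v₀ v₂) ∧ e = s(v₂, v₃)} with hSdef
  set D := K8.filter (fun d => P d ∧ d ≠ vec v₀ v₁ ∧ d ≠ -vec v₀ v₁) with hDdef
  set g : ℤ × ℤ → ℤ × ℤ :=
    fun d => (2 * d.1 + (vec v₀ v₁).1, 2 * d.2 + (vec v₀ v₁).2) with hgdef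
  have hinj : Set.InjOn (railKey v₀) S := by
    rintro e₁ ⟨v₂, v₃, hr, -, rfl⟩ e₂ ⟨v₂', v₃', hr', -, rfl⟩ hfe
    obtain ⟨-, -, hpar, -⟩ := hr
    obtain ⟨-, -, hpar', -⟩ := hr'
    rw [railKey_mk, railKey_mk] at hfe
    simp only [vec, Prod.mk.injEq] at hpar hpar' hfe
    have c2 : v₂ = v₂' := Prod.ext (Fin.ext (by omega)) (Fin.ext (by omega))
    have c3 : v₃ = v₃' := Prod.ext (Fin.ext (by omega)) (Fin.ext (by omega))
    rw [c2, c3]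
  have hsub : railKey v₀ '' S ⊆ ↑(D.image g) := by
    rintro x ⟨e, ⟨v₂, v₃, hr, hP, rfl⟩, rfl⟩
    obtain ⟨-, -, hpar, hadj02, hn02, hadj13, hn13⟩ := hr
    refine Finset.mem_coe.2 (Finset.mem_image.2 ⟨vec v₀ v₂, ?_, ?_⟩)
    · refine Finset.mem_filter.2 ⟨vec_mem_K8 hadj02, hP, ?_, ?_⟩
      · intro hd
        have hv : v₂ = v₁ := eq_of_vec_eq hd
        exact hn02 (hv ▸ h)
      · intro hd
        have hv : vec v₁ v₃ = vec v₁ v₀ := by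
          simp only [vec, Prod.mk.injEq, Prod.neg_mk] at hpar hd ⊢
          constructor <;> omega
        have hv0 : v₃ = v₀ := eq_of_vec_eq hv
        exact hn13 (by rw [hv0]; exact h.symm)
    · rw [railKey_mk, hgdef]
      simp only [vec, Prod.mk.injEq] at hpar ⊢
      constructor <;> omega
  calc S.ncard = (railKey v₀ '' S).ncard := (Set.ncard_image_of_injOn hinj).symm
    _ ≤ (↑(D.image g) : Set (ℤ × ℤ)).ncard :=
        Set.ncard_le_ncard hsub (Finset.finite_toSet _)
    _ = (D.image g).card := Set.ncard_coe_finset _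
    _ ≤ D.card := Finset.card_image_le
    _ ≤ k := hcard

theorem edge_in_few_rails (n : ℕ) (G : SimpleGraph (Fin n × Fin n))
    (hG : G ≤ knightsGraph n) (v₀ v₁ : Fin n × Fin n) (h : G.Adj v₀ v₁) :
    ({ e : Sym2 (Fin n × Fin n) |
        ∃ v₂ v₃, IsRail G v₀ v₁ v₂ v₃ ∧ 0 < (vec v₀ v₂).1 ∧ e = s(v₂, v₃) }.ncard ≤ 3) ∧
    ({ e : Sym2 (Fin n × Fin n) |
        ∃ v₂ v₃, IsRail G v₀ v₁ v₂ v₃ ∧ e = s(v₂, v₃) }.ncard ≤ 6) := by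
  classical
  have hwK : vec v₀ v₁ ∈ K8 := vec_mem_K8 (hG h)
  have hdisj : vec v₀ v₁ = (1,2) ∨ vec v₀ v₁ = (1,-2) ∨ vec v₀ v₁ = (-1,2) ∨
      vec v₀ v₁ = (-1,-2) ∨ vec v₀ v₁ = (2,1) ∨ vec v₀ v₁ = (2,-1) ∨
      vec v₀ v₁ = (-2,1) ∨ vec v₀ v₁ = (-2,-1) := by
    simpa only [K8, Finset.mem_insert, Finset.mem_singleton] using hwK
  constructor
  · refine rail_edges_card G v₀ v₁ h (fun d => 0 < d.1) 3 ?_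
    rcases hdisj with hw|hw|hw|hw|hw|hw|hw|hw <;> rw [hw] <;> decide
  · have hset : { e : Sym2 (Fin n × Fin n) |
        ∃ v₂ v₃, IsRail G v₀ v₁ v₂ v₃ ∧ e = s(v₂, v₃) } =
        { e : Sym2 (Fin n × Fin n) |
        ∃ v₂ v₃, IsRail G v₀ v₁ v₂ v₃ ∧ (fun _ : ℤ × ℤ => True) (vec v₀ v₂) ∧ e = s(v₂, v₃) } := by
      simp
    rw [hset]
    refine rail_edges_card G v₀ v₁ h (fun _ => True) 6 ?_
    rcases hdisj with hw|hw|hw|hw|hw|hw|hw|hw <;> rw [hw] <;> decide
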